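/- Let Φ = (Φ^1,…,Φ^N) ∈ K̃^N be a Miura-type transformation from the equation ∂_t(v) = G to the equation ∂_t(u) = F, and let σ be the substitution homomorphism determined by σ(λ) = λ and σ(u^γ_ℓ) = S̃^ℓ(Φ^γ), assumed well defined on all matrix entries involved. Then σ ∘ S = S̃ ∘ σ and σ ∘ D_t = D̃_t ∘ σ on these entries; consequently, if (M, U) is a matrix Lax representation for ∂_t(u) = F and det(σ(M)) ≠ 0, then (σ(M), σ(U)) is a matrix Lax representation for ∂_t(v) = G. -/

import Mathlib

/-!
Setup: `KK N` is the field of rational functions over `ℂ` in the commuting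
variables `λ` (here `lam N`) and `u^γ_ℓ` (here `uu N γ ℓ`, `γ : Fin N`, `ℓ : ℤ`),
realized as the fraction field of the multivariate polynomial ring.
`SS N` is the shift automorphism `S` (fixing `ℂ` and `λ`, sending `u^γ_ℓ` to
`u^γ_{ℓ+1}`), and `Sz N ℓ = S^ℓ`.
-/

set_option maxHeartbeats 1000000
set_option synthInstance.maxHeartbeats 1000000

noncomputable section

open MvPolynomial

abbrev RR (N : ℕ) : Type := MvPolynomial (Option (Fin N × ℤ)) ℂ
abbrev KK (N : ℕ) : Type := FractionRing (RR N)

def lam (N : ℕ) : KK N := algebraMap (RR N) (KK N) (X none)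
def uu (N : ℕ) (γ : Fin N) (ℓ : ℤ) : KK N := algebraMap (RR N) (KK N) (X (some (γ, ℓ)))

def shiftIdx (N : ℕ) : Option (Fin N × ℤ) ≃ Option (Fin N × ℤ) :=
  Equiv.optionCongr ((Equiv.refl (Fin N)).prodCongr (Equiv.addRight (1:ℤ)))

/-- The shift on polynomials: `λ ↦ λ`, `u^γ_ℓ ↦ u^γ_{ℓ+1}`. -/
def shiftR (N : ℕ) : RR N ≃+* RR N := (renameEquiv ℂ (shiftIdx N)).toRingEquiv

/-- The shift automorphism `S` of the field `KK N`. -/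
def SS (N : ℕ) : RingAut (KK N) := IsFractionRing.ringEquivOfRingEquiv (shiftR N)

/-- `Sz N ℓ = S^ℓ`. -/
def Sz (N : ℕ) (ℓ : ℤ) : KK N ≃+* KK N := SS N ^ ℓ

/-- The subfield of elements that are rational functions of `λ` and the
variables `u^γ_ℓ` with `ℓ ∈ s` only. -/
def depOn (N : ℕ) (s : Set ℤ) : Subfield (KK N) :=
  Subfield.closure (Set.range (algebraMap ℂ (KK N)) ∪ {lam N} ∪
    {x | ∃ γ : Fin N, ∃ ℓ ∈ s, x = uu N γ ℓ})

/-- The substitution homomorphism `σ` (on polynomials) determined by a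
Miura-type transformation `Φ`: `λ ↦ λ`, `u^γ_ℓ ↦ S^ℓ(Φ^γ)`. -/
def mtSubst (N : ℕ) (Φ : Fin N → KK N) : RR N →+* KK N :=
  (aeval (fun i : Option (Fin N × ℤ) =>
    match i with
    | none => lam N
    | some (γ, ℓ) => Sz N ℓ (Φ γ))).toRingHom

/-- `SubstRel N Φ x y` : `σ` is well defined at the rational function `x`
(i.e. `x = p/q` with `σ(q) ≠ 0`) and `σ(x) = y`. -/
def SubstRel (N : ℕ) (Φ : Fin N → KK N) (x y : KK N) : Prop :=
  ∃ p q : RR N, mtSubst N Φ q ≠ 0 ∧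
    x * algebraMap (RR N) (KK N) q = algebraMap (RR N) (KK N) p ∧
    y * mtSubst N Φ q = mtSubst N Φ p

-- ===== auxiliary lemmas =====

section Aux
variable {N : ℕ}

lemma alg_shiftR (r : RR N) :
    algebraMap (RR N) (KK N) (shiftR N r) = SS N (algebraMap (RR N) (KK N) r) :=
  (IsFractionRing.ringEquivOfRingEquiv_algebraMap (shiftR N) r).symm

lemma alg_C (c : ℂ) :
    algebraMap (RR N) (KK N) (C c) = algebraMap ℂ (KK N) c := by
  rw [IsScalarTower.algebraMap_apply ℂ (RR N) (KK N)]
  rfl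

lemma SS_const (c : ℂ) : SS N (algebraMap ℂ (KK N) c) = algebraMap ℂ (KK N) c := by
  rw [← alg_C, ← alg_shiftR]
  simp [shiftR]

lemma shiftR_X_none : shiftR N (X none) = X none := by
  simp [shiftR, shiftIdx]

lemma shiftR_X_some (γ : Fin N) (ℓ : ℤ) :
    shiftR N (X (some (γ, ℓ))) = X (some (γ, ℓ + 1)) := by
  simp [shiftR, shiftIdx]

lemma SS_lam : SS N (lam N) = lam N := by
  rw [lam, ← alg_shiftR, shiftR_X_none]

lemma SS_uu (γ : Fin N) (ℓ : ℤ) : SS N (uu N γ ℓ) = uu N γ (ℓ + 1) := by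
  rw [uu, ← alg_shiftR, shiftR_X_some]; rfl

lemma Sz_succ (ℓ : ℤ) (x : KK N) : Sz N (ℓ + 1) x = SS N (Sz N ℓ x) := by
  show (SS N ^ (ℓ + 1)) x = SS N ((SS N ^ ℓ) x)
  rw [add_comm, zpow_add, zpow_one]
  rfl

lemma Sz_pred (ℓ : ℤ) (x : KK N) : Sz N (ℓ - 1) x = (SS N).symm (Sz N ℓ x) := by
  have := Sz_succ (N := N) (ℓ - 1) x
  rw [sub_add_cancel] at this
  rw [this]
  exact ((SS N).symm_apply_apply _).symm

variable (Φ : Fin N → KK N)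

lemma mtSubst_X_none : mtSubst N Φ (X none) = lam N := by simp [mtSubst]

lemma mtSubst_X_some (γ : Fin N) (ℓ : ℤ) :
    mtSubst N Φ (X (some (γ, ℓ))) = Sz N ℓ (Φ γ) := by simp [mtSubst]

lemma mtSubst_C (c : ℂ) : mtSubst N Φ (C c) = algebraMap ℂ (KK N) c := by
  simp [mtSubst]

lemma mtSubst_shiftR (r : RR N) :
    mtSubst N Φ (shiftR N r) = SS N (mtSubst N Φ r) := by
  induction r using MvPolynomial.induction_on with
  | C c => rw [show shiftR N (C c) = C c by simp [shiftR], mtSubst_C, SS_const]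
  | add p q hp hq =>
      rw [map_add (shiftR N), map_add (mtSubst N Φ), hp, hq, map_add (mtSubst N Φ),
        ← map_add (SS N)]
  | mul_X p i hp =>
      have hX : mtSubst N Φ (shiftR N (X i)) = SS N (mtSubst N Φ (X i)) := by
        match i with
        | none => rw [shiftR_X_none, mtSubst_X_none, SS_lam]
        | some (γ, ℓ) => rw [shiftR_X_some, mtSubst_X_some, mtSubst_X_some, ← Sz_succ]
      rw [map_mul (shiftR N), map_mul (mtSubst N Φ), hp, hX, map_mul (mtSubst N Φ),
        ← map_mul (SS N)]

lemma mtSubst_shiftR_symm (r : RR N) :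
    mtSubst N Φ ((shiftR N).symm r) = (SS N).symm (mtSubst N Φ r) := by
  have := mtSubst_shiftR Φ ((shiftR N).symm r)
  rw [(shiftR N).apply_symm_apply] at this
  rw [this, (SS N).symm_apply_apply]

-- ===== SubstRel closure lemmas =====

lemma subst_alg (r : RR N) :
    SubstRel N Φ (algebraMap (RR N) (KK N) r) (mtSubst N Φ r) :=
  ⟨r, 1, by simp, by simp, by simp⟩

lemma subst_zero : SubstRel N Φ 0 0 := by
  simpa using subst_alg Φ 0

lemma subst_add {x y x' y' : KK N} (h : SubstRel N Φ x y) (h' : SubstRel N Φ x' y') :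
    SubstRel N Φ (x + x') (y + y') := by
  obtain ⟨p, q, hq, hx, hy⟩ := h
  obtain ⟨p', q', hq', hx', hy'⟩ := h'
  refine ⟨p * q' + p' * q, q * q', by simp [hq, hq'], ?_, ?_⟩
  · rw [map_add, map_mul, map_mul, map_mul, ← hx, ← hx']; ring
  · rw [map_add, map_mul, map_mul, map_mul, ← hy, ← hy']; ring

lemma subst_mul {x y x' y' : KK N} (h : SubstRel N Φ x y) (h' : SubstRel N Φ x' y') :
    SubstRel N Φ (x * x') (y * y') := by
  obtain ⟨p, q, hq, hx, hy⟩ := h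
  obtain ⟨p', q', hq', hx', hy'⟩ := h'
  refine ⟨p * p', q * q', by simp [hq, hq'], ?_, ?_⟩
  · rw [map_mul, map_mul, ← hx, ← hx']; ring
  · rw [map_mul, map_mul, ← hy, ← hy']; ring

lemma subst_neg {x y : KK N} (h : SubstRel N Φ x y) : SubstRel N Φ (-x) (-y) := by
  obtain ⟨p, q, hq, hx, hy⟩ := h
  exact ⟨-p, q, hq, by rw [map_neg, ← hx]; ring, by rw [map_neg, ← hy]; ring⟩

lemma subst_sub {x y x' y' : KK N} (h : SubstRel N Φ x y) (h' : SubstRel N Φ x' y') :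
    SubstRel N Φ (x - x') (y - y') := by
  simpa [sub_eq_add_neg] using subst_add Φ h (subst_neg Φ h')

lemma subst_sum {ι : Type*} (s : Finset ι) (f g : ι → KK N)
    (h : ∀ i ∈ s, SubstRel N Φ (f i) (g i)) :
    SubstRel N Φ (∑ i ∈ s, f i) (∑ i ∈ s, g i) := by
  classical
  induction s using Finset.induction_on with
  | empty => simpa using subst_zero Φ
  | insert a s hni ih =>
      rw [Finset.sum_insert hni, Finset.sum_insert hni]
      exact subst_add Φ (h a (Finset.mem_insert_self a s))
        (ih fun i hi => h i (Finset.mem_insert_of_mem hi))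

lemma subst_unique {x y y' : KK N} (h : SubstRel N Φ x y) (h' : SubstRel N Φ x y') :
    y = y' := by
  obtain ⟨p, q, hq, hx, hy⟩ := h
  obtain ⟨p', q', hq', hx', hy'⟩ := h'
  have hinj := IsFractionRing.injective (RR N) (KK N)
  have h1 : algebraMap (RR N) (KK N) (p * q') = algebraMap (RR N) (KK N) (p' * q) := by
    rw [map_mul, map_mul, ← hx, ← hx']; ring
  have h2 : p * q' = p' * q := hinj h1
  have h3 : mtSubst N Φ p * mtSubst N Φ q' = mtSubst N Φ p' * mtSubst N Φ q := by
    rw [← map_mul, ← map_mul, h2]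
  have h4 : y * (mtSubst N Φ q * mtSubst N Φ q') = y' * (mtSubst N Φ q * mtSubst N Φ q') := by
    calc y * (mtSubst N Φ q * mtSubst N Φ q') = (y * mtSubst N Φ q) * mtSubst N Φ q' := by ring
    _ = mtSubst N Φ p * mtSubst N Φ q' := by rw [hy]
    _ = mtSubst N Φ p' * mtSubst N Φ q := h3
    _ = (y' * mtSubst N Φ q') * mtSubst N Φ q := by rw [hy']
    _ = y' * (mtSubst N Φ q * mtSubst N Φ q') := by ring
  exact mul_right_cancel₀ (mul_ne_zero hq hq') h4

lemma subst_SS {x y : KK N} (h : SubstRel N Φ x y) :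
    SubstRel N Φ (SS N x) (SS N y) := by
  obtain ⟨p, q, hq, hx, hy⟩ := h
  refine ⟨shiftR N p, shiftR N q, ?_, ?_, ?_⟩
  · rw [mtSubst_shiftR]; exact fun hc => hq ((SS N).injective (by simpa using hc))
  · rw [alg_shiftR, alg_shiftR, ← map_mul, hx]
  · rw [mtSubst_shiftR, mtSubst_shiftR, ← map_mul, hy]

lemma subst_SS_symm {x y : KK N} (h : SubstRel N Φ x y) :
    SubstRel N Φ ((SS N).symm x) ((SS N).symm y) := by
  obtain ⟨p, q, hq, hx, hy⟩ := h
  refine ⟨(shiftR N).symm p, (shiftR N).symm q, ?_, ?_, ?_⟩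
  · rw [mtSubst_shiftR_symm]
    exact fun hc => hq ((SS N).symm.injective (by simpa using hc))
  · have h1 : algebraMap (RR N) (KK N) ((shiftR N).symm q)
        = (SS N).symm (algebraMap (RR N) (KK N) q) := by
      have := alg_shiftR (N := N) ((shiftR N).symm q)
      rw [(shiftR N).apply_symm_apply] at this
      rw [this, (SS N).symm_apply_apply]
    have h2 : algebraMap (RR N) (KK N) ((shiftR N).symm p)
        = (SS N).symm (algebraMap (RR N) (KK N) p) := by
      have := alg_shiftR (N := N) ((shiftR N).symm p)
      rw [(shiftR N).apply_symm_apply] at this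
      rw [this, (SS N).symm_apply_apply]
    rw [h1, h2, ← map_mul, hx]
  · rw [mtSubst_shiftR_symm, mtSubst_shiftR_symm, ← map_mul, hy]

lemma subst_Sz (ℓ : ℤ) {x y : KK N} (h : SubstRel N Φ x y) :
    SubstRel N Φ (Sz N ℓ x) (Sz N ℓ y) := by
  induction ℓ using Int.induction_on with
  | zero => simpa [Sz] using h
  | succ n ih => rw [Sz_succ, Sz_succ]; exact subst_SS Φ ih
  | pred n ih =>
      have : (-(n:ℤ) - 1) = (-(n:ℤ)) - 1 := rfl
      rw [this, Sz_pred, Sz_pred]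
      exact subst_SS_symm Φ ih

lemma subst_div {x y x' y' : KK N} (h : SubstRel N Φ x y) (h' : SubstRel N Φ x' y')
    (hy' : y' ≠ 0) : SubstRel N Φ (x / x') (y / y') := by
  obtain ⟨p, q, hq, hx, hyq⟩ := h
  obtain ⟨p', q', hq', hx', hyq'⟩ := h'
  have hσp' : mtSubst N Φ p' ≠ 0 := by
    rw [← hyq']; exact mul_ne_zero hy' hq'
  have hp'0 : p' ≠ 0 := fun hc => hσp' (by rw [hc, map_zero])
  have hx'0 : x' ≠ 0 := by
    intro hc
    apply hp'0
    apply IsFractionRing.injective (RR N) (KK N)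
    rw [map_zero, ← hx', hc, zero_mul]
  refine ⟨p * q', p' * q, by simp [hσp', hq], ?_, ?_⟩
  · rw [map_mul, map_mul, ← hx', ← hx]
    field_simp
  · rw [map_mul, map_mul, ← hyq', ← hyq]
    field_simp

end Aux

-- ===== derivation commutes with shift =====

section Der
variable {N : ℕ} (D : Derivation ℂ (KK N) (KK N))

lemma der_const (c : ℂ) : D (algebraMap ℂ (KK N) c) = 0 :=
  D.map_algebraMap c

lemma der_SS_alg (G : Fin N → KK N)
    (hl : D (lam N) = 0) (hu : ∀ γ ℓ, D (uu N γ ℓ) = Sz N ℓ (G γ)) (r : RR N) :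
    D (SS N (algebraMap (RR N) (KK N) r)) = SS N (D (algebraMap (RR N) (KK N) r)) := by
  induction r using MvPolynomial.induction_on with
  | C c =>
      rw [alg_C, SS_const, der_const]
      exact (map_zero _).symm
  | add p q hp hq =>
      rw [map_add (algebraMap (RR N) (KK N)), map_add (SS N), D.map_add, D.map_add, hp, hq,
        ← map_add (SS N)]
  | mul_X p i hp =>
      have hXcase : D (SS N (algebraMap (RR N) (KK N) (X i)))
          = SS N (D (algebraMap (RR N) (KK N) (X i))) := by
        match i with
        | none =>
            show D (SS N (lam N)) = SS N (D (lam N))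
            rw [SS_lam, hl, map_zero]
        | some (γ, ℓ) =>
            show D (SS N (uu N γ ℓ)) = SS N (D (uu N γ ℓ))
            rw [SS_uu, hu, hu, ← Sz_succ]
      rw [map_mul (algebraMap (RR N) (KK N)), map_mul (SS N), Derivation.leibniz,
        Derivation.leibniz]
      simp only [smul_eq_mul, map_add, map_mul]
      rw [hp, hXcase]

lemma der_SS (G : Fin N → KK N)
    (hl : D (lam N) = 0) (hu : ∀ γ ℓ, D (uu N γ ℓ) = Sz N ℓ (G γ)) (x : KK N) :
    D (SS N x) = SS N (D x) := by
  obtain ⟨p, q, hqm, rfl⟩ := IsFractionRing.div_surjective (A := RR N) x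
  have hq0 : algebraMap (RR N) (KK N) q ≠ 0 := fun h =>
    nonZeroDivisors.ne_zero hqm
      (IsFractionRing.injective (RR N) (KK N) (h.trans (map_zero _).symm))
  have hx : (algebraMap (RR N) (KK N) p / algebraMap (RR N) (KK N) q)
      * algebraMap (RR N) (KK N) q = algebraMap (RR N) (KK N) p :=
    div_mul_cancel₀ _ hq0
  have hmul : SS N (algebraMap (RR N) (KK N) p / algebraMap (RR N) (KK N) q)
      * SS N (algebraMap (RR N) (KK N) q) = SS N (algebraMap (RR N) (KK N) p) := by
    rw [← map_mul, hx]
  have e1 := D.leibniz (SS N (algebraMap (RR N) (KK N) p / algebraMap (RR N) (KK N) q))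
    (SS N (algebraMap (RR N) (KK N) q))
  rw [hmul] at e1
  have e2 := D.leibniz (algebraMap (RR N) (KK N) p / algebraMap (RR N) (KK N) q)
    (algebraMap (RR N) (KK N) q)
  rw [hx] at e2
  have e2' := congrArg (SS N) e2
  simp only [smul_eq_mul, map_add, map_mul] at e1 e2'
  rw [der_SS_alg D G hl hu p, der_SS_alg D G hl hu q] at e1
  have haq : SS N (algebraMap (RR N) (KK N) q) ≠ 0 := fun hc =>
    hq0 ((SS N).injective (hc.trans (map_zero _).symm))
  have key : SS N (algebraMap (RR N) (KK N) q)
        * D (SS N (algebraMap (RR N) (KK N) p / algebraMap (RR N) (KK N) q))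
      = SS N (algebraMap (RR N) (KK N) q)
        * SS N (D (algebraMap (RR N) (KK N) p / algebraMap (RR N) (KK N) q)) := by
    linear_combination e2' - e1
  exact mul_left_cancel₀ haq key

lemma der_SS_symm (G : Fin N → KK N)
    (hl : D (lam N) = 0) (hu : ∀ γ ℓ, D (uu N γ ℓ) = Sz N ℓ (G γ)) (x : KK N) :
    D ((SS N).symm x) = (SS N).symm (D x) := by
  have := der_SS D G hl hu ((SS N).symm x)
  rw [(SS N).apply_symm_apply] at this
  rw [this, (SS N).symm_apply_apply]

lemma der_Sz (G : Fin N → KK N)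
    (hl : D (lam N) = 0) (hu : ∀ γ ℓ, D (uu N γ ℓ) = Sz N ℓ (G γ)) (ℓ : ℤ) (x : KK N) :
    D (Sz N ℓ x) = Sz N ℓ (D x) := by
  induction ℓ using Int.induction_on with
  | zero => rw [show Sz N 0 = 1 from zpow_zero _]; rfl
  | succ n ih => rw [Sz_succ, Sz_succ, der_SS D G hl hu, ih]
  | pred n ih =>
      have h : (-(n:ℤ) - 1) = (-(n:ℤ)) - 1 := rfl
      rw [h, Sz_pred, Sz_pred, der_SS_symm D G hl hu, ih]

end Der

-- ===== sigma commutes with D_t =====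

section Main
variable {N : ℕ} (Φ F G : Fin N → KK N)
  (Dt Dtt : Derivation ℂ (KK N) (KK N))

lemma subst_Dt_alg (hDtlam : Dt (lam N) = 0) (hDtu : ∀ γ ℓ, Dt (uu N γ ℓ) = Sz N ℓ (F γ))
    (hDttlam : Dtt (lam N) = 0) (hDttu : ∀ γ ℓ, Dtt (uu N γ ℓ) = Sz N ℓ (G γ))
    (hMT : ∀ i, SubstRel N Φ (F i) (Dtt (Φ i))) (r : RR N) :
    SubstRel N Φ (Dt (algebraMap (RR N) (KK N) r)) (Dtt (mtSubst N Φ r)) := by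
  induction r using MvPolynomial.induction_on with
  | C c => rw [alg_C, der_const, mtSubst_C, der_const]; exact subst_zero Φ
  | add p q hp hq =>
      rw [map_add (algebraMap (RR N) (KK N)), map_add (mtSubst N Φ), Dt.map_add, Dtt.map_add]
      exact subst_add Φ hp hq
  | mul_X p i hp =>
      have hX : SubstRel N Φ (Dt (algebraMap (RR N) (KK N) (X i)))
          (Dtt (mtSubst N Φ (X i))) := by
        match i with
        | none =>
            show SubstRel N Φ (Dt (lam N)) (Dtt (mtSubst N Φ (X none)))
            rw [mtSubst_X_none, hDtlam, hDttlam]; exact subst_zero Φ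
        | some (γ, ℓ) =>
            show SubstRel N Φ (Dt (uu N γ ℓ)) (Dtt (mtSubst N Φ (X (some (γ, ℓ)))))
            rw [mtSubst_X_some, hDtu, der_Sz Dtt G hDttlam hDttu]
            exact subst_Sz Φ ℓ (hMT γ)
      have hXa : SubstRel N Φ (algebraMap (RR N) (KK N) (X i)) (mtSubst N Φ (X i)) :=
        subst_alg Φ _
      have hpa : SubstRel N Φ (algebraMap (RR N) (KK N) p) (mtSubst N Φ p) := subst_alg Φ _
      rw [map_mul (algebraMap (RR N) (KK N)), map_mul (mtSubst N Φ), Dt.leibniz, Dtt.leibniz]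
      simp only [smul_eq_mul]
      exact subst_add Φ (subst_mul Φ hpa hX) (subst_mul Φ hXa hp)

lemma subst_Dt (hDtlam : Dt (lam N) = 0) (hDtu : ∀ γ ℓ, Dt (uu N γ ℓ) = Sz N ℓ (F γ))
    (hDttlam : Dtt (lam N) = 0) (hDttu : ∀ γ ℓ, Dtt (uu N γ ℓ) = Sz N ℓ (G γ))
    (hMT : ∀ i, SubstRel N Φ (F i) (Dtt (Φ i))) {x y : KK N} (h : SubstRel N Φ x y) :
    SubstRel N Φ (Dt x) (Dtt y) := by
  obtain ⟨p, q, hq, hx, hy⟩ := h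
  have hq0 : algebraMap (RR N) (KK N) q ≠ 0 := fun hc => hq (by
    have h0 : q = 0 := IsFractionRing.injective (RR N) (KK N) (hc.trans (map_zero _).symm)
    rw [h0, map_zero])
  have e1 := Dt.leibniz x (algebraMap (RR N) (KK N) q)
  rw [hx] at e1
  have hDx : Dt x = (Dt (algebraMap (RR N) (KK N) p)
      - x * Dt (algebraMap (RR N) (KK N) q)) / algebraMap (RR N) (KK N) q := by
    rw [eq_div_iff hq0]
    simp only [smul_eq_mul] at e1
    linear_combination -e1
  have e2 := Dtt.leibniz y (mtSubst N Φ q)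
  rw [hy] at e2
  have hDy : Dtt y = (Dtt (mtSubst N Φ p) - y * Dtt (mtSubst N Φ q)) / mtSubst N Φ q := by
    rw [eq_div_iff hq]
    simp only [smul_eq_mul] at e2
    linear_combination -e2
  rw [hDx, hDy]
  have hxy : SubstRel N Φ x y := ⟨p, q, hq, hx, hy⟩
  exact subst_div Φ
    (subst_sub Φ (subst_Dt_alg Φ F G Dt Dtt hDtlam hDtu hDttlam hDttu hMT p)
      (subst_mul Φ hxy (subst_Dt_alg Φ F G Dt Dtt hDtlam hDtu hDttlam hDttu hMT q)))
    (subst_alg Φ q) hq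

end Main

/-- if `Φ` is a Miura-type transformation from `∂ₜ(v) = G` to
`∂ₜ(u) = F` and `σ` is the substitution homomorphism determined by
`σ(λ) = λ`, `σ(u^γ_ℓ) = S̃^ℓ(Φ^γ)` (assumed well defined on all matrix entries
involved), then `σ∘S = S̃∘σ` and `σ∘D_t = D̃_t∘σ` on these entries;
consequently, if `(M, U)` is an MLR for `∂ₜ(u) = F` and `det(σ(M)) ≠ 0`, then
`(σ(M), σ(U))` is an MLR for `∂ₜ(v) = G`.  (Here the field of rational
functions in `λ` and the variables `v^γ_ℓ` is realized by the same concrete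
field `KK N`, with `S̃ = S` and with `D̃t` the total derivative of the second
equation.) -/
theorem statement9 (N d : ℕ) (hN : 0 < N) (hd : 0 < d)
    (a b ta tb : ℤ) (hab : a ≤ b) (htab : ta ≤ tb)
    (F : Fin N → KK N) (hF : ∀ γ, F γ ∈ depOn N (Set.Icc a b))
    (G : Fin N → KK N) (hG : ∀ γ, G γ ∈ depOn N (Set.Icc ta tb))
    -- the total derivative `D_t` of `∂ₜ(u) = F`:
    (Dt : Derivation ℂ (KK N) (KK N)) (hDtlam : Dt (lam N) = 0)
    (hDtu : ∀ γ ℓ, Dt (uu N γ ℓ) = Sz N ℓ (F γ))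
    -- the total derivative `D̃_t` of `∂ₜ(v) = G`:
    (Dtt : Derivation ℂ (KK N) (KK N)) (hDttlam : Dtt (lam N) = 0)
    (hDttu : ∀ γ ℓ, Dtt (uu N γ ℓ) = Sz N ℓ (G γ))
    -- `Φ` is a Miura-type transformation from `∂ₜ(v) = G` to `∂ₜ(u) = F`:
    (Φ : Fin N → KK N)
    (hMT : ∀ i, SubstRel N Φ (F i) (Dtt (Φ i)))
    -- an MLR `(M, U)` for `∂ₜ(u) = F`:
    (M U : Matrix (Fin d) (Fin d) (KK N))
    (hMdet : M.det ≠ 0)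
    (hLax : M.map ⇑Dt = U.map ⇑(Sz N 1) * M - M * U)
    -- `σ` is well defined on all entries of `M` and `U`, with values `Ms`, `Us`:
    (Ms Us : Matrix (Fin d) (Fin d) (KK N))
    (hMs : ∀ p q, SubstRel N Φ (M p q) (Ms p q))
    (hUs : ∀ p q, SubstRel N Φ (U p q) (Us p q))
    (hMsdet : Ms.det ≠ 0) :
    -- `σ ∘ S = S̃ ∘ σ` on the entries of `M` and `U`:
    (∀ p q, SubstRel N Φ (Sz N 1 (M p q)) (Sz N 1 (Ms p q)) ∧
      SubstRel N Φ (Sz N 1 (U p q)) (Sz N 1 (Us p q))) ∧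
    -- `σ ∘ D_t = D̃_t ∘ σ` on the entries of `M` and `U`:
    (∀ p q, SubstRel N Φ (Dt (M p q)) (Dtt (Ms p q)) ∧
      SubstRel N Φ (Dt (U p q)) (Dtt (Us p q))) ∧
    -- `(σ(M), σ(U))` is an MLR for `∂ₜ(v) = G`:
    Ms.map ⇑Dtt = Us.map ⇑(Sz N 1) * Ms - Ms * Us := by
  refine ⟨fun p q => ⟨subst_Sz Φ 1 (hMs p q), subst_Sz Φ 1 (hUs p q)⟩,
    fun p q => ⟨subst_Dt Φ F G Dt Dtt hDtlam hDtu hDttlam hDttu hMT (hMs p q),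
      subst_Dt Φ F G Dt Dtt hDtlam hDtu hDttlam hDttu hMT (hUs p q)⟩, ?_⟩
  ext p q
  have hentry : Dt (M p q) =
      (∑ k, Sz N 1 (U p k) * M k q) - ∑ k, M p k * U k q := by
    have h := congrArg (fun A => A p q) hLax
    simpa [Matrix.map_apply, Matrix.mul_apply, Matrix.sub_apply] using h
  have lhsRel : SubstRel N Φ (Dt (M p q)) (Dtt (Ms p q)) :=
    subst_Dt Φ F G Dt Dtt hDtlam hDtu hDttlam hDttu hMT (hMs p q)
  rw [hentry] at lhsRel
  have rhsRel : SubstRel N Φ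
      ((∑ k, Sz N 1 (U p k) * M k q) - ∑ k, M p k * U k q)
      ((∑ k, Sz N 1 (Us p k) * Ms k q) - ∑ k, Ms p k * Us k q) :=
    subst_sub Φ
      (subst_sum Φ _ _ _ (fun k _ => subst_mul Φ (subst_Sz Φ 1 (hUs p k)) (hMs k q)))
      (subst_sum Φ _ _ _ (fun k _ => subst_mul Φ (hMs p k) (hUs k q)))
  have hval : Dtt (Ms p q) = (∑ k, Sz N 1 (Us p k) * Ms k q) - ∑ k, Ms p k * Us k q :=
    subst_unique Φ lhsRel rhsRel
  simp only [Matrix.map_apply, Matrix.sub_apply, Matrix.mul_apply]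
  rw [hval]
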